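/- Fix an integer n ≥ 1. The function f(z) = (1/√n) Σ_{j=0}^{n−1} z^{j(n+1)} = (1/√n)(1 + z^{n+1} + z^{2(n+1)} + ⋯ + z^{(n−1)(n+1)}) is a unit vector in H² and is T_{z^n}-inner. -/

import Mathlib

open MeasureTheory Complex Filter Metric

/-- Normalized Lebesgue (arclength) measure on the unit circle `𝕋 ⊆ ℂ`. -/
noncomputable def mCirc : Measure ℂ :=
  Measure.map (fun θ : ℝ => Complex.exp (θ * Complex.I))
    ((ENNReal.ofReal (2 * Real.pi))⁻¹ • volume.restrict (Set.Ioc 0 (2 * Real.pi)))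

/-- `f` is (the boundary function of) a function in the Hardy space `H²`:
it is square integrable on `𝕋` and its negative Fourier coefficients vanish. -/
def MemH2 (f : ℂ → ℂ) : Prop :=
  MemLp f 2 mCirc ∧ ∀ n : ℕ, 1 ≤ n → ∫ z, f z * z ^ n ∂mCirc = 0

/-- `u` is (the boundary function of) an inner function: it is unimodular a.e. on `𝕋`
and its negative Fourier coefficients vanish. -/
def InnerBdry (u : ℂ → ℂ) : Prop :=
  (∀ᵐ z ∂mCirc, ‖u z‖ = 1) ∧ ∀ n : ℕ, 1 ≤ n → ∫ z, u z * z ^ n ∂mCirc = 0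

/-- `φ` is (the boundary function of) a function in `H^∞`. -/
def HinfBdry (φ : ℂ → ℂ) : Prop :=
  MemLp φ ⊤ mCirc ∧ ∀ n : ℕ, 1 ≤ n → ∫ z, φ z * z ^ n ∂mCirc = 0

/-- `f` is a `T_φ`-inner vector: a unit vector with `⟨φ^n f, f⟩ = 0` for all `n ≥ 1`. -/
def TInner (φ f : ℂ → ℂ) : Prop :=
  (∫ z, ‖f z‖ ^ 2 ∂mCirc) = 1 ∧
  ∀ n : ℕ, 1 ≤ n → ∫ z, (φ z) ^ n * (f z * (starRingEnd ℂ) (f z)) ∂mCirc = 0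

/-- `f` belongs to the model space `K_u = H² ⊖ u H²`. -/
def InKu (u f : ℂ → ℂ) : Prop :=
  MemH2 f ∧ ∀ n : ℕ, ∫ z, f z * (starRingEnd ℂ) (u z * z ^ n) ∂mCirc = 0

-- ## Auxiliary lemmas

lemma aemeas_exp : AEMeasurable (fun θ : ℝ => Complex.exp (θ * Complex.I))
    ((ENNReal.ofReal (2 * Real.pi))⁻¹ • (volume : Measure ℝ).restrict (Set.Ioc 0 (2 * Real.pi))) :=
  (Complex.continuous_exp.comp (Complex.continuous_ofReal.mul continuous_const)).aemeasurable

lemma mCirc_integral {E : Type*} [NormedAddCommGroup E] [NormedSpace ℝ E]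
    (g : ℂ → E) (hg : AEStronglyMeasurable g mCirc) :
    ∫ z, g z ∂mCirc
      = (2 * Real.pi)⁻¹ • ∫ θ in (0:ℝ)..(2 * Real.pi), g (Complex.exp (θ * Complex.I)) := by
  rw [mCirc] at hg ⊢
  rw [MeasureTheory.integral_map aemeas_exp hg, integral_smul_measure,
    intervalIntegral.integral_of_le (by positivity : (0:ℝ) ≤ 2 * Real.pi)]
  congr 1
  rw [ENNReal.toReal_inv, ENNReal.toReal_ofReal (by positivity)]

lemma ae_circ : ∀ᵐ z ∂mCirc, ‖z‖ = 1 := by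
  rw [mCirc, MeasureTheory.ae_map_iff aemeas_exp]
  · exact Eventually.of_forall fun θ => Complex.norm_exp_ofReal_mul_I θ
  · exact (isClosed_eq continuous_norm continuous_const).measurableSet

instance : IsFiniteMeasure mCirc := by
  constructor
  rw [mCirc, Measure.map_apply_of_aemeasurable aemeas_exp MeasurableSet.univ]
  simp only [Set.preimage_univ, Measure.smul_apply, smul_eq_mul, Measure.restrict_apply_univ,
    Real.volume_Ioc, sub_zero]
  exact ENNReal.mul_lt_top (lt_of_le_of_lt (ENNReal.inv_le_one.mpr
    (ENNReal.one_le_ofReal.mpr (by nlinarith [Real.pi_gt_three]))) ENNReal.one_lt_top)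
    ENNReal.ofReal_lt_top

lemma circ_bound {g : ℂ → ℂ} (hg : Continuous g) :
    ∃ C : ℝ, ∀ᵐ z ∂mCirc, ‖g z‖ ≤ C := by
  obtain ⟨C, hC⟩ := (isCompact_sphere (0:ℂ) 1).exists_bound_of_continuousOn hg.continuousOn
  refine ⟨C, ?_⟩
  filter_upwards [ae_circ] with z hz
  exact hC z (by simpa [mem_sphere_iff_norm] using hz)

lemma integrable_circ {g : ℂ → ℂ} (hg : Continuous g) : Integrable g mCirc := by
  obtain ⟨C, hC⟩ := circ_bound hg
  exact Integrable.mono' (integrable_const C) hg.aestronglyMeasurable hC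

lemma memLp_circ {g : ℂ → ℂ} (hg : Continuous g) (p : ENNReal) : MemLp g p mCirc := by
  obtain ⟨C, hC⟩ := circ_bound hg
  exact MemLp.of_bound hg.aestronglyMeasurable C hC

lemma exp_integral (m : ℤ) :
    ∫ θ in (0:ℝ)..(2 * Real.pi), Complex.exp ((m : ℂ) * θ * Complex.I)
      = if m = 0 then ((2 * Real.pi : ℝ) : ℂ) else 0 := by
  rcases eq_or_ne m 0 with h | h
  · simp [h]
  · rw [if_neg h]
    have hc : ((m : ℂ) * Complex.I) ≠ 0 := by
      simp [Complex.ext_iff, Complex.I_ne_zero, h]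
    have harr : ∀ θ : ℝ, (m : ℂ) * θ * Complex.I = ((m : ℂ) * Complex.I) * θ := fun θ => by ring
    simp_rw [harr]
    rw [integral_exp_mul_complex hc]
    have h1 : Complex.exp ((m:ℂ) * Complex.I * ((2 * Real.pi : ℝ):ℂ)) = 1 := by
      rw [show (m:ℂ) * Complex.I * ((2 * Real.pi : ℝ):ℂ) = (m:ℂ) * (2 * Real.pi * Complex.I) by
        push_cast; ring]
      exact Complex.exp_int_mul_two_pi_mul_I m
    rw [h1]
    simp

lemma mono_integral (a b : ℕ) :
    ∫ z, z ^ a * (starRingEnd ℂ) z ^ b ∂mCirc = if a = b then 1 else 0 := by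
  have hcont : Continuous fun z : ℂ => z ^ a * (starRingEnd ℂ) z ^ b :=
    (continuous_pow a).mul (Complex.continuous_conj.pow b)
  rw [mCirc_integral _ hcont.aestronglyMeasurable]
  have key : ∀ θ : ℝ, Complex.exp (θ * Complex.I) ^ a
      * (starRingEnd ℂ) (Complex.exp (θ * Complex.I)) ^ b
      = Complex.exp ((((a : ℤ) - b : ℤ) : ℂ) * θ * Complex.I) := by
    intro θ
    rw [← Complex.exp_nat_mul, ← Complex.exp_conj, ← Complex.exp_nat_mul, ← Complex.exp_add]
    congr 1
    rw [map_mul, Complex.conj_ofReal, Complex.conj_I]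
    push_cast
    ring
  simp_rw [key]
  rw [exp_integral]
  rcases eq_or_ne a b with h | h
  · rw [if_pos (by omega), if_pos h, Complex.real_smul, ← Complex.ofReal_mul,
      inv_mul_cancel₀ (by positivity), Complex.ofReal_one]
  · rw [if_neg (by omega), if_neg h, smul_zero]

/-- the key arithmetic fact -/
lemma arith_no_sol {n m j k : ℕ} (hn : 1 ≤ n) (hm : 1 ≤ m) (_hj : j < n) (hk : k < n) :
    n * m + j * (n + 1) ≠ k * (n + 1) := by
  intro h
  have hjk : j < k := by
    have h1 : j * (n + 1) < k * (n + 1) := by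
      have : 1 ≤ n * m := Nat.one_le_iff_ne_zero.mpr (by positivity)
      omega
    exact Nat.lt_of_mul_lt_mul_right h1
  have hsub : (k - j) * (n + 1) = n * m := by
    rw [Nat.sub_mul]
    omega
  have hdvd : n ∣ (k - j) * (n + 1) := ⟨m, hsub.symm ▸ rfl⟩
  have hcop : Nat.Coprime n (n + 1) := by simp
  have : n ∣ (k - j) := hcop.dvd_of_dvd_mul_right hdvd
  have := Nat.le_of_dvd (by omega) this
  omega

/-- for `n ≥ 1`, the function
`f(z) = (1/√n)(1 + z^{n+1} + z^{2(n+1)} + ⋯ + z^{(n−1)(n+1)})`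
is a unit vector in `H²` and is `T_{z^n}`-inner. -/
theorem statement8 (n : ℕ) (hn : 1 ≤ n) :
    MemH2 (fun z : ℂ =>
      (((Real.sqrt n : ℝ) : ℂ))⁻¹ * ∑ j ∈ Finset.range n, z ^ (j * (n + 1))) ∧
    TInner (fun z : ℂ => z ^ n)
      (fun z : ℂ =>
        (((Real.sqrt n : ℝ) : ℂ))⁻¹ * ∑ j ∈ Finset.range n, z ^ (j * (n + 1))) := by
  set c : ℂ := (((Real.sqrt n : ℝ) : ℂ))⁻¹ with hc
  set f : ℂ → ℂ := fun z => c * ∑ j ∈ Finset.range n, z ^ (j * (n + 1)) with hf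
  have hfcont : Continuous f :=
    continuous_const.mul (continuous_finset_sum _ fun j _ => continuous_pow _)
  have hcc : c * (starRingEnd ℂ) c = ((n : ℂ))⁻¹ := by
    rw [hc, map_inv₀, Complex.conj_ofReal, ← mul_inv, ← Complex.ofReal_mul,
      Real.mul_self_sqrt (by positivity), Complex.ofReal_natCast]
  -- expansion of ∫ z^m * f z * conj (f z)
  have expand : ∀ m : ℕ, ∫ z, z ^ m * (f z * (starRingEnd ℂ) (f z)) ∂mCirc
      = ∑ j ∈ Finset.range n, ∑ k ∈ Finset.range n,
          (c * (starRingEnd ℂ) c) * (if m + j * (n + 1) = k * (n + 1) then (1:ℂ) else 0) := by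
    intro m
    have hpt : ∀ z : ℂ, z ^ m * (f z * (starRingEnd ℂ) (f z))
        = ∑ j ∈ Finset.range n, ∑ k ∈ Finset.range n,
            (c * (starRingEnd ℂ) c) * (z ^ (m + j * (n + 1))
              * (starRingEnd ℂ) z ^ (k * (n + 1))) := by
      intro z
      simp only [hf, map_mul, map_sum, map_pow, Finset.mul_sum, Finset.sum_mul, pow_add]
      rw [Finset.sum_comm]
      refine Finset.sum_congr rfl fun j _ => ?_
      refine Finset.sum_congr rfl fun k _ => ?_
      ring
    simp_rw [hpt]
    rw [MeasureTheory.integral_finset_sum _ fun j _ => integrable_circ (g := fun z =>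
      ∑ k ∈ Finset.range n, c * (starRingEnd ℂ) c * (z ^ (m + j * (n + 1)) * (starRingEnd ℂ) z ^ (k * (n + 1))))
      (continuous_finset_sum _ fun k _ => continuous_const.mul
        ((continuous_pow _).mul (Complex.continuous_conj.pow _)))]
    refine Finset.sum_congr rfl fun j _ => ?_
    rw [MeasureTheory.integral_finset_sum _ fun k _ => integrable_circ (g := fun z =>
      c * (starRingEnd ℂ) c * (z ^ (m + j * (n + 1)) * (starRingEnd ℂ) z ^ (k * (n + 1))))
      (continuous_const.mul ((continuous_pow _).mul (Complex.continuous_conj.pow _)))]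
    refine Finset.sum_congr rfl fun k _ => ?_
    rw [integral_const_mul, mono_integral]
  refine ⟨⟨memLp_circ hfcont 2, ?_⟩, ?_, ?_⟩
  · -- negative Fourier coefficients vanish
    intro m hm
    have hpt : ∀ z : ℂ, f z * z ^ m
        = ∑ j ∈ Finset.range n, c * (z ^ (j * (n + 1) + m) * (starRingEnd ℂ) z ^ 0) := by
      intro z
      simp only [hf, pow_zero, mul_one, pow_add, mul_assoc, Finset.sum_mul, Finset.mul_sum]
    simp_rw [hpt]
    rw [MeasureTheory.integral_finset_sum _ fun j _ => integrable_circ (g := fun z =>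
      c * (z ^ (j * (n + 1) + m) * (starRingEnd ℂ) z ^ 0))
      (continuous_const.mul ((continuous_pow _).mul (Complex.continuous_conj.pow _)))]
    refine Finset.sum_eq_zero fun j _ => ?_
    rw [integral_const_mul, mono_integral, if_neg (by omega), mul_zero]
  · -- unit norm
    have h1 : ∫ z, f z * (starRingEnd ℂ) (f z) ∂mCirc = 1 := by
      have h0 := expand 0
      simp only [pow_zero, one_mul, zero_add, hcc] at h0
      rw [h0]
      have : ∀ j ∈ Finset.range n, ∑ k ∈ Finset.range n,
          ((n:ℂ))⁻¹ * (if j * (n + 1) = k * (n + 1) then (1:ℂ) else 0) = ((n:ℂ))⁻¹ := by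
        intro j hj
        have : ∀ k, (if j * (n + 1) = k * (n + 1) then (1:ℂ) else 0)
            = if k = j then (1:ℂ) else 0 := by
          intro k
          congr 1
          simp only [eq_iff_iff]
          constructor
          · intro h; exact (Nat.eq_of_mul_eq_mul_right (by omega) h).symm
          · intro h; rw [h]
        simp_rw [this]
        rw [← Finset.mul_sum, Finset.sum_ite_eq' (Finset.range n) j (fun _ => (1:ℂ)),
          if_pos hj, mul_one]
      rw [Finset.sum_congr rfl this, Finset.sum_const, Finset.card_range, nsmul_eq_mul,
        mul_inv_cancel₀ (Nat.cast_ne_zero.mpr (by omega))]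
    have hptre : ∀ z : ℂ, ‖f z‖ ^ 2 = (f z * (starRingEnd ℂ) (f z)).re := by
      intro z
      rw [Complex.mul_conj, Complex.ofReal_re, Complex.sq_norm]
    simp_rw [hptre]
    have hint : Integrable (fun z => f z * (starRingEnd ℂ) (f z)) mCirc :=
      integrable_circ (hfcont.mul (Complex.continuous_conj.comp hfcont))
    have := integral_re (μ := mCirc) (f := fun z => f z * (starRingEnd ℂ) (f z)) hint
    simp only [RCLike.re_to_complex] at this
    rw [this, h1, Complex.one_re]
  · -- T_{z^n}-inner
    intro m hm
    have hpow : ∀ z : ℂ, (z ^ n) ^ m = z ^ (n * m) := fun z => by rw [← pow_mul]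
    simp_rw [hpow]
    rw [expand (n * m)]
    refine Finset.sum_eq_zero fun j hj => Finset.sum_eq_zero fun k hk => ?_
    rw [if_neg (arith_no_sol hn hm (Finset.mem_range.mp hj) (Finset.mem_range.mp hk)), mul_zero]
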